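/- Let d = 2 and let x ∈ ℝ² satisfy ε < |x| < 2. Set y = F_ε(x), r' = |y| (so 1 < r' < 2), let J = DF_ε(x) be the 2×2 Jacobian matrix of F_ε at x, and let M = J·Jᵀ / det(J). Then, with A₁₁(r') = (r'-1)/r' + ε/(r'(2-ε)), one has M·y = A₁₁(r')·y and M·y⊥ = (1/A₁₁(r'))·y⊥, where y⊥ = (-y₂, y₁); that is, the push-forward conductivity F_ε*Id has radial eigenvalue A₁₁(r') and azimuthal eigenvalue 1/A₁₁(r'). -/

import Mathlib

/-- The Kohn regularised cloaking map `F_ε : ℝ² → ℝ²`. -/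
noncomputable def kohnMap2 (ε : ℝ) (x : EuclideanSpace ℝ (Fin 2)) :
    EuclideanSpace ℝ (Fin 2) :=
  if 2 ≤ ‖x‖ then x
  else if ε ≤ ‖x‖ then ((2 - 2 * ε) / (2 - ε) + ‖x‖ / (2 - ε)) • (‖x‖⁻¹ • x)
  else ε⁻¹ • x

open ContinuousLinearMap in
lemma kohn_hasFDerivAt (ε : ℝ) (hε0 : 0 < ε) (x : EuclideanSpace ℝ (Fin 2))
    (hx1 : ε < ‖x‖) (hx2 : ‖x‖ < 2) :
    HasFDerivAt (kohnMap2 ε)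
      (((2 - 2*ε)/(2-ε)/‖x‖ + (2-ε)⁻¹) • ContinuousLinearMap.id ℝ (EuclideanSpace ℝ (Fin 2))
        - ((2 - 2*ε)/(2-ε)/‖x‖^3) • ((innerSL ℝ x).smulRight x)) x := by
  have hr0 : (0:ℝ) < ‖x‖ := hε0.trans hx1
  set A : ℝ := (2 - 2*ε)/(2-ε) with hA
  set B : ℝ := (2-ε)⁻¹ with hB
  -- derivative of ‖z‖⁻¹
  have hsq : HasFDerivAt (fun z : EuclideanSpace ℝ (Fin 2) => ‖z‖^2) (2 • innerSL ℝ x) x :=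
    (hasStrictFDerivAt_norm_sq x).hasFDerivAt
  have hsqrtinv : HasDerivAt (fun t : ℝ => (Real.sqrt t)⁻¹)
      (-(1/(2*Real.sqrt (‖x‖^2)) / (Real.sqrt (‖x‖^2))^2)) (‖x‖^2) := by
    have h1 : HasDerivAt Real.sqrt (1/(2*Real.sqrt (‖x‖^2))) (‖x‖^2) :=
      Real.hasDerivAt_sqrt (by positivity)
    have h2 : Real.sqrt (‖x‖^2) ≠ 0 := by
      rw [Real.sqrt_sq hr0.le]; exact hr0.ne'
    rw [← neg_div]; exact h1.fun_inv h2
  have hinv : HasFDerivAt (fun z : EuclideanSpace ℝ (Fin 2) => ‖z‖⁻¹)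
      ((-(1/(2*Real.sqrt (‖x‖^2)) / (Real.sqrt (‖x‖^2))^2)) • (2 • innerSL ℝ x)) x := by
    have := hsqrtinv.comp_hasFDerivAt x hsq
    have hfun : (fun z : EuclideanSpace ℝ (Fin 2) => (Real.sqrt (‖z‖^2))⁻¹)
        = fun z => ‖z‖⁻¹ := by
      funext z; rw [Real.sqrt_sq (norm_nonneg z)]
    rw [← hfun]
    exact this
  have hmul := hinv.smul (hasFDerivAt_id x)
  have hg := (hmul.const_smul A).add ((hasFDerivAt_id x).const_smul B)
  -- kohnMap2 agrees with g near x
  have heq : kohnMap2 ε =ᶠ[nhds x]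
      (fun z : EuclideanSpace ℝ (Fin 2) => A • (‖z‖⁻¹ • z) + B • z) := by
    have hS : IsOpen {z : EuclideanSpace ℝ (Fin 2) | ε < ‖z‖ ∧ ‖z‖ < 2} :=
      (isOpen_lt continuous_const continuous_norm).inter
        (isOpen_lt continuous_norm continuous_const)
    filter_upwards [hS.mem_nhds ⟨hx1, hx2⟩] with z hz
    obtain ⟨hz1, hz2⟩ := hz
    have hz0 : ‖z‖ ≠ 0 := (hε0.trans hz1).ne'
    rw [kohnMap2, if_neg (not_le.2 hz2), if_pos hz1.le, add_smul]
    congr 1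
    rw [smul_smul, hB]
    congr 1
    rw [mul_comm, ← mul_div_assoc, inv_mul_cancel₀ hz0, one_div]
  have hmain := hg.congr_of_eventuallyEq heq
  refine hmain.congr_fderiv ?_
  refine ContinuousLinearMap.ext fun v => ?_
  have hs : Real.sqrt (‖x‖^2) = ‖x‖ := Real.sqrt_sq hr0.le
  simp only [ContinuousLinearMap.sub_apply, ContinuousLinearMap.add_apply,
    ContinuousLinearMap.smul_apply, ContinuousLinearMap.coe_id', id_eq,
    ContinuousLinearMap.coe_smul', Pi.smul_apply,
    ContinuousLinearMap.smulRight_apply, hs]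
  have hrne : ‖x‖ ≠ 0 := hr0.ne'
  match_scalars <;> field_simp <;> ring_nf <;> field_simp

set_option maxHeartbeats 1000000 in
open RealInnerProductSpace in
/-- In dimension 2, the push-forward conductivity `M = J Jᵀ / det J` (with `J = DF_ε(x)`,
`y = F_ε(x)`, `r' = |y|`) has radial eigenvalue `A₁₁(r') = (r'-1)/r' + ε/(r'(2-ε))`
and azimuthal eigenvalue `1/A₁₁(r')`: `M y = A₁₁(r') y` and `M y⊥ = A₁₁(r')⁻¹ y⊥`,
where `y⊥ = (-y₂, y₁)`. Moreover `1 < r' < 2`. -/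
theorem kohnMap2_pushforward_eigen (ε : ℝ) (hε0 : 0 < ε) (hε1 : ε < 1)
    (x : EuclideanSpace ℝ (Fin 2)) (hx1 : ε < ‖x‖) (hx2 : ‖x‖ < 2)
    (y : EuclideanSpace ℝ (Fin 2)) (hy : y = kohnMap2 ε x)
    (r' : ℝ) (hr' : r' = ‖y‖)
    (J : EuclideanSpace ℝ (Fin 2) →ₗ[ℝ] EuclideanSpace ℝ (Fin 2))
    (hJ : J = (fderiv ℝ (kohnMap2 ε) x : EuclideanSpace ℝ (Fin 2) →ₗ[ℝ] EuclideanSpace ℝ (Fin 2)))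
    (M : EuclideanSpace ℝ (Fin 2) →ₗ[ℝ] EuclideanSpace ℝ (Fin 2))
    (hM : M = (LinearMap.det J)⁻¹ • (J ∘ₗ LinearMap.adjoint J))
    (A11 : ℝ) (hA11 : A11 = (r' - 1) / r' + ε / (r' * (2 - ε)))
    (yperp : EuclideanSpace ℝ (Fin 2))
    (hyperp : yperp = (EuclideanSpace.equiv (Fin 2) ℝ).symm ![-(y 1), y 0]) :
    1 < r' ∧ r' < 2 ∧ M y = A11 • y ∧ M yperp = A11⁻¹ • yperp := by
  have h2ε : (0:ℝ) < 2 - ε := by linarith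
  have h2εne : (2:ℝ) - ε ≠ 0 := h2ε.ne' 
  have hr0 : (0:ℝ) < ‖x‖ := hε0.trans hx1
  obtain ⟨r, hrdef⟩ : ∃ r, r = ‖x‖ := ⟨_, rfl⟩
  have hrne : r ≠ 0 := by rw [hrdef]; exact hr0.ne'
  have hrpos : 0 < r := hrdef ▸ hr0
  obtain ⟨A, hAdef⟩ : ∃ A : ℝ, A = (2 - 2*ε)/(2-ε) := ⟨_, rfl⟩
  obtain ⟨B, hBdef⟩ : ∃ B : ℝ, B = (2-ε)⁻¹ := ⟨_, rfl⟩
  have hB0 : 0 < B := by rw [hBdef]; positivity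
  have hA0 : 0 ≤ A := by rw [hAdef]; apply div_nonneg <;> linarith
  obtain ⟨c, hcdef⟩ : ∃ c : ℝ, c = A/r + B := ⟨_, rfl⟩
  obtain ⟨k, hkdef⟩ : ∃ k : ℝ, k = A/r^3 := ⟨_, rfl⟩
  have hc0 : 0 < c := by
    have : 0 ≤ A/r := div_nonneg hA0 hrpos.le
    rw [hcdef]; linarith
  have hL := kohn_hasFDerivAt ε hε0 x hx1 hx2
  have hJv : ∀ v, J v = c • v - (k * ⟪x, v⟫) • x := by
    intro v
    rw [hJ, hL.fderiv, hcdef, hkdef, hAdef, hBdef, hrdef]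
    simp only [ContinuousLinearMap.coe_coe, ContinuousLinearMap.sub_apply,
      ContinuousLinearMap.smul_apply, ContinuousLinearMap.coe_id', id_eq,
      ContinuousLinearMap.smulRight_apply, innerSL_apply_apply, smul_smul]
  -- J is self-adjoint
  have hadj : LinearMap.adjoint J = J := by
    symm
    rw [LinearMap.eq_adjoint_iff]
    intro u v
    simp only [hJv, inner_sub_left, inner_sub_right, real_inner_smul_left,
      real_inner_smul_right]
    rw [real_inner_comm x u]
    ring
  -- determinant
  have hsum : x 0 ^ 2 + x 1 ^ 2 = r ^ 2 := by
    rw [hrdef, EuclideanSpace.norm_eq, Real.sq_sqrt (by positivity), Fin.sum_univ_two,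
      Real.norm_eq_abs, Real.norm_eq_abs, sq_abs, sq_abs]
  have hdet : LinearMap.det J = B * c := by
    rw [← LinearMap.det_toMatrix (EuclideanSpace.basisFun (Fin 2) ℝ).toBasis J,
      Matrix.det_fin_two]
    have hent : ∀ i j : Fin 2,
        LinearMap.toMatrix (EuclideanSpace.basisFun (Fin 2) ℝ).toBasis
          (EuclideanSpace.basisFun (Fin 2) ℝ).toBasis J i j
        = (if i = j then c else 0) - k * x j * x i := by
      intro i j
      rw [LinearMap.toMatrix_apply]
      simp only [OrthonormalBasis.coe_toBasis, OrthonormalBasis.coe_toBasis_repr_apply,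
        EuclideanSpace.basisFun_apply, EuclideanSpace.basisFun_repr]
      rw [hJv, EuclideanSpace.inner_single_right]
      simp only [PiLp.sub_apply, PiLp.smul_apply, smul_eq_mul, EuclideanSpace.single_apply,
        map_one, one_mul, mul_ite, mul_one, mul_zero]
      by_cases h : i = j
      · subst h; simp
      · simp [h, Ne.symm h]
    rw [hent, hent, hent, hent]
    norm_num
    have hkr : k * r^2 = A / r := by rw [hkdef]; field_simp
    linear_combination (-(c*k)) * hsum + (-c) * hkr + c * hcdef
  -- the image point
  obtain ⟨ρ, hρdef⟩ : ∃ ρ : ℝ, ρ = A + r * B := ⟨_, rfl⟩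
  have hρeq : ρ * (2-ε) = 2 - 2*ε + r := by
    rw [hρdef, hAdef, hBdef]; field_simp
  have hx1r : ε < r := hrdef ▸ hx1
  have hx2r : r < 2 := hrdef ▸ hx2
  have hρ1 : 1 < ρ := by nlinarith [hρeq, h2ε, hx1r]
  have hρ2 : 2 > ρ := by nlinarith [hρeq, h2ε, hx2r]
  have hρ0 : 0 < ρ := by linarith
  have hρne : ρ ≠ 0 := hρ0.ne'
  have hyx : y = (ρ / r) • x := by
    rw [hy, kohnMap2, if_neg (not_le.2 hx2), if_pos hx1.le, smul_smul]
    congr 1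
    rw [hρdef, hAdef, hBdef, hrdef]
    have : ‖x‖ ≠ 0 := hr0.ne'
    field_simp
  have hr'ρ : r' = ρ := by
    rw [hr', hyx, norm_smul, Real.norm_eq_abs, abs_of_pos (div_pos hρ0 hrpos), ← hrdef]
    field_simp
  have hcr : c * r = ρ := by
    rw [hcdef, hρdef]; field_simp
  refine ⟨hr'ρ ▸ hρ1, hr'ρ ▸ hρ2, ?_, ?_⟩
  · -- radial eigenvalue
    have hxx : ⟪x, x⟫ = r^2 := by rw [hrdef, real_inner_self_eq_norm_sq]
    have hJx : J x = B • x := by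
      rw [hJv, hxx, ← sub_smul]
      congr 1
      rw [hcdef, hkdef]
      field_simp
      ring
    have hJy : J y = (B * (ρ/r)) • x := by
      rw [hyx, map_smul, hJx, smul_smul, mul_comm]
    have hA11' : A11 * ρ = B * r := by
      have e1 : (ρ - 1)/ρ * ρ = ρ - 1 := div_mul_cancel₀ _ hρne
      have e2 : ε/(ρ*(2-ε)) * ρ = ε/(2-ε) := by
        rw [mul_comm ρ (2-ε), ← div_div, div_mul_cancel₀ _ hρne]
      rw [hA11, hr'ρ, add_mul, e1, e2, hBdef]
      apply mul_right_cancel₀ h2εne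
      rw [add_mul, div_mul_cancel₀ _ h2εne, inv_mul_eq_div, div_mul_eq_mul_div,
        mul_div_assoc, div_self h2εne, mul_one]
      linear_combination hρeq
    have hJJy : J (J y) = (B * (ρ/r) * B) • x := by
      rw [hJy, LinearMap.map_smul, hJx, smul_smul]
    rw [hM, hadj, hdet]
    simp only [LinearMap.smul_apply, LinearMap.comp_apply]
    rw [hJJy, hyx, smul_smul, smul_smul]
    congr 1
    -- (B*c)⁻¹ * (B*(ρ/r)*B) = A11 * (ρ/r)
    have hcne : c ≠ 0 := hc0.ne'
    have hBne : B ≠ 0 := hB0.ne'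
    field_simp
    apply mul_right_cancel₀ hrne
    linear_combination (-1) * hA11' - A11 * hcr
  · -- azimuthal eigenvalue
    have hy0 : y 0 = (ρ/r) * x 0 := by rw [hyx]; rfl
    have hy1 : y 1 = (ρ/r) * x 1 := by rw [hyx]; rfl
    have hyp0 : yperp 0 = -(y 1) := by rw [hyperp]; rfl
    have hyp1 : yperp 1 = y 0 := by rw [hyperp]; rfl
    have hxyp : ⟪x, yperp⟫ = 0 := by
      simp only [PiLp.inner_apply, RCLike.inner_apply, Fin.sum_univ_two, starRingEnd_apply,
        star_trivial]
      rw [hyp0, hyp1, hy0, hy1]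
      ring
    have hJyp : J yperp = c • yperp := by
      rw [hJv, hxyp]
      simp
    have hJJyp : J (J yperp) = (c * c) • yperp := by
      rw [hJyp, LinearMap.map_smul, hJyp, smul_smul]
    rw [hM, hadj, hdet]
    simp only [LinearMap.smul_apply, LinearMap.comp_apply]
    rw [hJJyp, smul_smul]
    congr 1
    -- (B*c)⁻¹ * (c * c) = A11⁻¹
    have hA11' : A11 * ρ = B * r := by
      have e1 : (ρ - 1)/ρ * ρ = ρ - 1 := div_mul_cancel₀ _ hρne
      have e2 : ε/(ρ*(2-ε)) * ρ = ε/(2-ε) := by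
        rw [mul_comm ρ (2-ε), ← div_div, div_mul_cancel₀ _ hρne]
      rw [hA11, hr'ρ, add_mul, e1, e2, hBdef]
      apply mul_right_cancel₀ h2εne
      rw [add_mul, div_mul_cancel₀ _ h2εne, inv_mul_eq_div, div_mul_eq_mul_div,
        mul_div_assoc, div_self h2εne, mul_one]
      linear_combination hρeq
    have hA11ne : A11 ≠ 0 := by
      intro h
      rw [h, zero_mul] at hA11'
      exact (mul_pos hB0 hrpos).ne (hA11'.symm ▸ rfl)
    have hcne : c ≠ 0 := hc0.ne'
    have hBne : B ≠ 0 := hB0.ne'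
    have hA11c : c * A11 = B := by
      apply mul_right_cancel₀ hrne
      linear_combination hA11' + A11 * hcr
    field_simp
    linear_combination hA11c
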